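/- Let w₁, …, w₅ be real numbers and T₁ = w₁·K₅⁺ + w₂·L₃⁺ + w₃·K₁⁺ + w₄·K₃⁻ + w₅·L₃⁻. If the partial transpose of T₁ over the second-sample factors A₂ ⊗ B₂ is positive semidefinite, then w₂ = w₅. -/

import Mathlib

open Matrix
open scoped Matrix Kronecker ComplexOrder

noncomputable section

/-- Index type of `ℂ² ⊗ ℂ²`. -/
abbrev Q : Type := Fin 2 × Fin 2

/-- The standard basis vector `|ab⟩` of `ℂ² ⊗ ℂ²`. -/
def ket (a b : Fin 2) : Q → ℂ := fun p => if p = (a, b) then 1 else 0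

/-- The Bell basis `φ⁰, φ¹, φ², φ³` of `ℂ² ⊗ ℂ²`. -/
def bell : Fin 4 → Q → ℂ
  | 0 => fun p => (ket 0 0 p + ket 1 1 p) / (Real.sqrt 2 : ℂ)
  | 1 => fun p => Complex.I * (ket 0 1 p + ket 1 0 p) / (Real.sqrt 2 : ℂ)
  | 2 => fun p => (-ket 0 1 p + ket 1 0 p) / (Real.sqrt 2 : ℂ)
  | 3 => fun p => Complex.I * (ket 0 0 p - ket 1 1 p) / (Real.sqrt 2 : ℂ)

/-- The product basis `e^{jk} = φʲ ⊗ φᵏ` of `(ℂ²⊗ℂ²)⊗(ℂ²⊗ℂ²)`. -/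
def e (j k : Fin 4) : Q × Q → ℂ := fun pq => bell j pq.1 * bell k pq.2

/-- Rank-one operator `|v⟩⟨v|`. -/
def outer {m : Type*} (v : m → ℂ) : Matrix m m ℂ := vecMulVec v (star v)

/-- Orthogonal projection onto
`span{e^{jk}+e^{kj} : 1≤j<k≤3} ∪ {e^{11}−e^{22}, e^{22}−e^{33}}`. -/
def K5 : Matrix (Q × Q) (Q × Q) ℂ :=
  (1 / 2 : ℂ) • (outer (e 1 2 + e 2 1) + outer (e 2 3 + e 3 2) + outer (e 3 1 + e 1 3)) +
    (1 / 2 : ℂ) • outer (e 1 1 - e 2 2) +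
    (1 / 6 : ℂ) • outer (e 1 1 + e 2 2 - (2 : ℂ) • e 3 3)

/-- Orthogonal projection onto `span{e^{11}+e^{22}+e^{33}}`. -/
def K1 : Matrix (Q × Q) (Q × Q) ℂ :=
  (1 / 3 : ℂ) • outer (e 1 1 + e 2 2 + e 3 3)

/-- Orthogonal projection onto `span{e^{jk}−e^{kj} : 1≤j<k≤3}`. -/
def K3m : Matrix (Q × Q) (Q × Q) ℂ :=
  (1 / 2 : ℂ) • (outer (e 1 2 - e 2 1) + outer (e 2 3 - e 3 2) + outer (e 3 1 - e 1 3))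

/-- Orthogonal projection onto `span{e^{00}}`. -/
def L1 : Matrix (Q × Q) (Q × Q) ℂ := outer (e 0 0)

/-- Orthogonal projection onto `span{e^{0j}+e^{j0} : j=1,2,3}`. -/
def L3p : Matrix (Q × Q) (Q × Q) ℂ :=
  (1 / 2 : ℂ) • (outer (e 0 1 + e 1 0) + outer (e 0 2 + e 2 0) + outer (e 0 3 + e 3 0))

/-- Orthogonal projection onto `span{e^{0j}−e^{j0} : j=1,2,3}`. -/
def L3m : Matrix (Q × Q) (Q × Q) ℂ :=
  (1 / 2 : ℂ) • (outer (e 0 1 - e 1 0) + outer (e 0 2 - e 2 0) + outer (e 0 3 - e 3 0))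

/-- The matrix elements `x_{jk} = ⟨φʲ, σ φᵏ⟩` of a state `σ` in the Bell basis. -/
def x (σ : Matrix Q Q ℂ) (j k : Fin 4) : ℂ := star (bell j) ⬝ᵥ σ.mulVec (bell k)

-- An element of `Q × Q = (A₁ × B₁) × (A₂ × B₂)` is the quadruple of indices
-- `((a₁,b₁),(a₂,b₂))` of `(ℂ²)^{⊗4} = A₁ ⊗ B₁ ⊗ A₂ ⊗ B₂`;
-- the first sample is `A₁ ⊗ B₁` and the second sample is `A₂ ⊗ B₂`.

/-- Partial transpose over the second sample `A₂ ⊗ B₂`. -/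
def ptSecond (X : Matrix (Q × Q) (Q × Q) ℂ) : Matrix (Q × Q) (Q × Q) ℂ :=
  Matrix.of fun r c => X (r.1, c.2) (c.1, r.2)

/-- Partial transpose over the factors `B₁ ⊗ B₂`. -/
def ptB (X : Matrix (Q × Q) (Q × Q) ℂ) : Matrix (Q × Q) (Q × Q) ℂ :=
  Matrix.of fun r c =>
    X ((r.1.1, c.1.2), (r.2.1, c.2.2)) ((c.1.1, r.1.2), (c.2.1, r.2.2))

/-- Partial transpose over the single factor `B₂`. -/
def ptB2 (X : Matrix (Q × Q) (Q × Q) ℂ) : Matrix (Q × Q) (Q × Q) ℂ :=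
  Matrix.of fun r c => X (r.1, (r.2.1, c.2.2)) (c.1, (c.2.1, r.2.2))


def vvt (t : ℝ) : Q × Q → ℂ := fun pq =>
  if pq.1.1 = pq.1.2 ∧ pq.2.1 = pq.2.2 then 1 else if pq.1 = pq.2 then (t : ℂ) else 0

lemma quadM (t : ℝ) (M : Matrix (Q × Q) (Q × Q) ℂ) :
    star (vvt t) ⬝ᵥ M.mulVec (vvt t) =
      (∑ r ∈ ({((0,0),(0,0)), ((0,0),(1,1)), ((1,1),(0,0)), ((1,1),(1,1))} : Finset (Q × Q)),
        ∑ c ∈ ({((0,0),(0,0)), ((0,0),(1,1)), ((1,1),(0,0)), ((1,1),(1,1))} : Finset (Q × Q)), M r c)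
      + (t : ℂ) * (∑ r ∈ ({((0,0),(0,0)), ((0,0),(1,1)), ((1,1),(0,0)), ((1,1),(1,1))} : Finset (Q × Q)),
          ∑ c ∈ ({((0,1),(0,1)), ((1,0),(1,0))} : Finset (Q × Q)), (M r c + M c r))
      + (t : ℂ) * (t : ℂ) * (∑ r ∈ ({((0,1),(0,1)), ((1,0),(1,0))} : Finset (Q × Q)),
          ∑ c ∈ ({((0,1),(0,1)), ((1,0),(1,0))} : Finset (Q × Q)), M r c) := by
  simp only [dotProduct, mulVec, Fintype.sum_prod_type, Fin.sum_univ_two, vvt,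
    Pi.star_apply, RCLike.star_def]
  norm_num [Prod.ext_iff, Finset.sum_insert, Finset.mem_insert]
  ring
noncomputable def s : ℂ := ((Real.sqrt 2 : ℝ) : ℂ)⁻¹

@[simp] lemma bell_0_00 : bell 0 (0,0) = s := by norm_num [bell, ket, s, Prod.ext_iff]; try ring
@[simp] lemma bell_0_01 : bell 0 (0,1) = 0 := by norm_num [bell, ket, s, Prod.ext_iff]; try ring
@[simp] lemma bell_0_10 : bell 0 (1,0) = 0 := by norm_num [bell, ket, s, Prod.ext_iff]; try ring
@[simp] lemma bell_0_11 : bell 0 (1,1) = s := by norm_num [bell, ket, s, Prod.ext_iff]; try ring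
@[simp] lemma bell_1_00 : bell 1 (0,0) = 0 := by norm_num [bell, ket, s, Prod.ext_iff]; try ring
@[simp] lemma bell_1_01 : bell 1 (0,1) = Complex.I * s := by norm_num [bell, ket, s, Prod.ext_iff]; try ring
@[simp] lemma bell_1_10 : bell 1 (1,0) = Complex.I * s := by norm_num [bell, ket, s, Prod.ext_iff]; try ring
@[simp] lemma bell_1_11 : bell 1 (1,1) = 0 := by norm_num [bell, ket, s, Prod.ext_iff]; try ring
@[simp] lemma bell_2_00 : bell 2 (0,0) = 0 := by norm_num [bell, ket, s, Prod.ext_iff]; try ring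
@[simp] lemma bell_2_01 : bell 2 (0,1) = -s := by norm_num [bell, ket, s, Prod.ext_iff]; try ring
@[simp] lemma bell_2_10 : bell 2 (1,0) = s := by norm_num [bell, ket, s, Prod.ext_iff]; try ring
@[simp] lemma bell_2_11 : bell 2 (1,1) = 0 := by norm_num [bell, ket, s, Prod.ext_iff]; try ring
@[simp] lemma bell_3_00 : bell 3 (0,0) = Complex.I * s := by norm_num [bell, ket, s, Prod.ext_iff]; try ring
@[simp] lemma bell_3_01 : bell 3 (0,1) = 0 := by norm_num [bell, ket, s, Prod.ext_iff]; try ring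
@[simp] lemma bell_3_10 : bell 3 (1,0) = 0 := by norm_num [bell, ket, s, Prod.ext_iff]; try ring
@[simp] lemma bell_3_11 : bell 3 (1,1) = -(Complex.I * s) := by norm_num [bell, ket, s, Prod.ext_iff]; try ring
@[simp] lemma bell_0_zero : bell 0 (0 : Q) = s := by rw [← Prod.mk_zero_zero, bell_0_00]
@[simp] lemma bell_0_one : bell 0 (1 : Q) = s := by rw [← Prod.mk_one_one, bell_0_11]
@[simp] lemma bell_1_zero : bell 1 (0 : Q) = 0 := by rw [← Prod.mk_zero_zero, bell_1_00]
@[simp] lemma bell_1_one : bell 1 (1 : Q) = 0 := by rw [← Prod.mk_one_one, bell_1_11]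
@[simp] lemma bell_2_zero : bell 2 (0 : Q) = 0 := by rw [← Prod.mk_zero_zero, bell_2_00]
@[simp] lemma bell_2_one : bell 2 (1 : Q) = 0 := by rw [← Prod.mk_one_one, bell_2_11]
@[simp] lemma bell_3_zero : bell 3 (0 : Q) = Complex.I * s := by rw [← Prod.mk_zero_zero, bell_3_00]
@[simp] lemma bell_3_one : bell 3 (1 : Q) = -(Complex.I * s) := by rw [← Prod.mk_one_one, bell_3_11]

lemma s_sq : s ^ 2 = 2⁻¹ := by
  rw [s, sq, ← mul_inv, ← Complex.ofReal_mul, Real.mul_self_sqrt (by norm_num)]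
  norm_num

lemma s_pow4 : s ^ 4 = 4⁻¹ := by
  rw [show (4:ℕ) = 2*2 from rfl, pow_mul, s_sq]; norm_num

@[simp] lemma conj_s : (starRingEnd ℂ) s = s := by
  rw [s, map_inv₀, Complex.conj_ofReal]

lemma qK5a (t : ℝ) :
    star (vvt t) ⬝ᵥ (ptSecond (outer (e 1 2 + e 2 1))).mulVec (vvt t) = 2 * (t:ℂ)^2 := by
  rw [quadM]
  simp only [ptSecond, Matrix.of_apply, outer, vecMulVec, Pi.sub_apply, Pi.add_apply,
    Pi.smul_apply, smul_eq_mul, Pi.star_apply, e, _root_.map_sub, _root_.map_mul,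
    _root_.map_add, map_neg, _root_.map_one, _root_.map_zero, conj_s, Complex.conj_I,
    Finset.sum_insert, Finset.mem_insert, Finset.sum_singleton]
  norm_num [Prod.ext_iff]
  ring_nf
  try simp [s_sq, s_pow4, Complex.I_sq]
  try ring

lemma qK5b (t : ℝ) :
    star (vvt t) ⬝ᵥ (ptSecond (outer (e 2 3 + e 3 2))).mulVec (vvt t) = 0 := by
  rw [quadM]
  simp only [ptSecond, Matrix.of_apply, outer, vecMulVec, Pi.sub_apply, Pi.add_apply,
    Pi.smul_apply, smul_eq_mul, Pi.star_apply, e, _root_.map_sub, _root_.map_mul,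
    _root_.map_add, map_neg, _root_.map_one, _root_.map_zero, conj_s, Complex.conj_I,
    Finset.sum_insert, Finset.mem_insert, Finset.sum_singleton]
  norm_num [Prod.ext_iff]
  ring_nf
  try simp [s_sq, s_pow4, Complex.I_sq]
  try ring

lemma qK5c (t : ℝ) :
    star (vvt t) ⬝ᵥ (ptSecond (outer (e 3 1 + e 1 3))).mulVec (vvt t) = 0 := by
  rw [quadM]
  simp only [ptSecond, Matrix.of_apply, outer, vecMulVec, Pi.sub_apply, Pi.add_apply,
    Pi.smul_apply, smul_eq_mul, Pi.star_apply, e, _root_.map_sub, _root_.map_mul,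
    _root_.map_add, map_neg, _root_.map_one, _root_.map_zero, conj_s, Complex.conj_I,
    Finset.sum_insert, Finset.mem_insert, Finset.sum_singleton]
  norm_num [Prod.ext_iff]
  ring_nf
  try simp [s_sq, s_pow4, Complex.I_sq]
  try ring

lemma qK5d (t : ℝ) :
    star (vvt t) ⬝ᵥ (ptSecond (outer (e 1 1 - e 2 2))).mulVec (vvt t) = 2 * (t:ℂ)^2 := by
  rw [quadM]
  simp only [ptSecond, Matrix.of_apply, outer, vecMulVec, Pi.sub_apply, Pi.add_apply,
    Pi.smul_apply, smul_eq_mul, Pi.star_apply, e, _root_.map_sub, _root_.map_mul,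
    _root_.map_add, map_neg, _root_.map_one, _root_.map_zero, conj_s, Complex.conj_I,
    Finset.sum_insert, Finset.mem_insert, Finset.sum_singleton]
  norm_num [Prod.ext_iff]
  ring_nf
  try simp [s_sq, s_pow4, Complex.I_sq]
  try ring

lemma qK5e (t : ℝ) :
    star (vvt t) ⬝ᵥ (ptSecond (outer (e 1 1 + e 2 2 - (2:ℂ) • e 3 3))).mulVec (vvt t) = 2 * (t:ℂ)^2 := by
  rw [quadM]
  simp only [ptSecond, Matrix.of_apply, outer, vecMulVec, Pi.sub_apply, Pi.add_apply,
    Pi.smul_apply, smul_eq_mul, Pi.star_apply, e, _root_.map_sub, _root_.map_mul,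
    _root_.map_add, map_neg, _root_.map_one, _root_.map_zero, conj_s, Complex.conj_I,
    Finset.sum_insert, Finset.mem_insert, Finset.sum_singleton]
  norm_num [Prod.ext_iff]
  ring_nf
  try simp [s_sq, s_pow4, Complex.I_sq]
  try ring

lemma qK1a (t : ℝ) :
    star (vvt t) ⬝ᵥ (ptSecond (outer (e 1 1 + e 2 2 + e 3 3))).mulVec (vvt t) = 2 * (t:ℂ)^2 := by
  rw [quadM]
  simp only [ptSecond, Matrix.of_apply, outer, vecMulVec, Pi.sub_apply, Pi.add_apply,
    Pi.smul_apply, smul_eq_mul, Pi.star_apply, e, _root_.map_sub, _root_.map_mul,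
    _root_.map_add, map_neg, _root_.map_one, _root_.map_zero, conj_s, Complex.conj_I,
    Finset.sum_insert, Finset.mem_insert, Finset.sum_singleton]
  norm_num [Prod.ext_iff]
  ring_nf
  try simp [s_sq, s_pow4, Complex.I_sq]
  try ring

lemma qK3a (t : ℝ) :
    star (vvt t) ⬝ᵥ (ptSecond (outer (e 1 2 - e 2 1))).mulVec (vvt t) = -(2 * (t:ℂ)^2) := by
  rw [quadM]
  simp only [ptSecond, Matrix.of_apply, outer, vecMulVec, Pi.sub_apply, Pi.add_apply,
    Pi.smul_apply, smul_eq_mul, Pi.star_apply, e, _root_.map_sub, _root_.map_mul,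
    _root_.map_add, map_neg, _root_.map_one, _root_.map_zero, conj_s, Complex.conj_I,
    Finset.sum_insert, Finset.mem_insert, Finset.sum_singleton]
  norm_num [Prod.ext_iff]
  ring_nf
  try simp [s_sq, s_pow4, Complex.I_sq]
  try ring

lemma qK3b (t : ℝ) :
    star (vvt t) ⬝ᵥ (ptSecond (outer (e 2 3 - e 3 2))).mulVec (vvt t) = 0 := by
  rw [quadM]
  simp only [ptSecond, Matrix.of_apply, outer, vecMulVec, Pi.sub_apply, Pi.add_apply,
    Pi.smul_apply, smul_eq_mul, Pi.star_apply, e, _root_.map_sub, _root_.map_mul,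
    _root_.map_add, map_neg, _root_.map_one, _root_.map_zero, conj_s, Complex.conj_I,
    Finset.sum_insert, Finset.mem_insert, Finset.sum_singleton]
  norm_num [Prod.ext_iff]
  ring_nf
  try simp [s_sq, s_pow4, Complex.I_sq]
  try ring

lemma qK3c (t : ℝ) :
    star (vvt t) ⬝ᵥ (ptSecond (outer (e 3 1 - e 1 3))).mulVec (vvt t) = 0 := by
  rw [quadM]
  simp only [ptSecond, Matrix.of_apply, outer, vecMulVec, Pi.sub_apply, Pi.add_apply,
    Pi.smul_apply, smul_eq_mul, Pi.star_apply, e, _root_.map_sub, _root_.map_mul,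
    _root_.map_add, map_neg, _root_.map_one, _root_.map_zero, conj_s, Complex.conj_I,
    Finset.sum_insert, Finset.mem_insert, Finset.sum_singleton]
  norm_num [Prod.ext_iff]
  ring_nf
  try simp [s_sq, s_pow4, Complex.I_sq]
  try ring

lemma qLpa (t : ℝ) :
    star (vvt t) ⬝ᵥ (ptSecond (outer (e 0 1 + e 1 0))).mulVec (vvt t) = 4 * (t:ℂ) := by
  rw [quadM]
  simp only [ptSecond, Matrix.of_apply, outer, vecMulVec, Pi.sub_apply, Pi.add_apply,
    Pi.smul_apply, smul_eq_mul, Pi.star_apply, e, _root_.map_sub, _root_.map_mul,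
    _root_.map_add, map_neg, _root_.map_one, _root_.map_zero, conj_s, Complex.conj_I,
    Finset.sum_insert, Finset.mem_insert, Finset.sum_singleton]
  norm_num [Prod.ext_iff]
  ring_nf
  try simp [s_sq, s_pow4, Complex.I_sq]
  try ring

lemma qLpb (t : ℝ) :
    star (vvt t) ⬝ᵥ (ptSecond (outer (e 0 2 + e 2 0))).mulVec (vvt t) = 4 * (t:ℂ) := by
  rw [quadM]
  simp only [ptSecond, Matrix.of_apply, outer, vecMulVec, Pi.sub_apply, Pi.add_apply,
    Pi.smul_apply, smul_eq_mul, Pi.star_apply, e, _root_.map_sub, _root_.map_mul,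
    _root_.map_add, map_neg, _root_.map_one, _root_.map_zero, conj_s, Complex.conj_I,
    Finset.sum_insert, Finset.mem_insert, Finset.sum_singleton]
  norm_num [Prod.ext_iff]
  ring_nf
  try simp [s_sq, s_pow4, Complex.I_sq]
  try ring

lemma qLpc (t : ℝ) :
    star (vvt t) ⬝ᵥ (ptSecond (outer (e 0 3 + e 3 0))).mulVec (vvt t) = 0 := by
  rw [quadM]
  simp only [ptSecond, Matrix.of_apply, outer, vecMulVec, Pi.sub_apply, Pi.add_apply,
    Pi.smul_apply, smul_eq_mul, Pi.star_apply, e, _root_.map_sub, _root_.map_mul,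
    _root_.map_add, map_neg, _root_.map_one, _root_.map_zero, conj_s, Complex.conj_I,
    Finset.sum_insert, Finset.mem_insert, Finset.sum_singleton]
  norm_num [Prod.ext_iff]
  ring_nf
  try simp [s_sq, s_pow4, Complex.I_sq]
  try ring

lemma qLma (t : ℝ) :
    star (vvt t) ⬝ᵥ (ptSecond (outer (e 0 1 - e 1 0))).mulVec (vvt t) = -(4 * (t:ℂ)) := by
  rw [quadM]
  simp only [ptSecond, Matrix.of_apply, outer, vecMulVec, Pi.sub_apply, Pi.add_apply,
    Pi.smul_apply, smul_eq_mul, Pi.star_apply, e, _root_.map_sub, _root_.map_mul,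
    _root_.map_add, map_neg, _root_.map_one, _root_.map_zero, conj_s, Complex.conj_I,
    Finset.sum_insert, Finset.mem_insert, Finset.sum_singleton]
  norm_num [Prod.ext_iff]
  ring_nf
  try simp [s_sq, s_pow4, Complex.I_sq]
  try ring

lemma qLmb (t : ℝ) :
    star (vvt t) ⬝ᵥ (ptSecond (outer (e 0 2 - e 2 0))).mulVec (vvt t) = -(4 * (t:ℂ)) := by
  rw [quadM]
  simp only [ptSecond, Matrix.of_apply, outer, vecMulVec, Pi.sub_apply, Pi.add_apply,
    Pi.smul_apply, smul_eq_mul, Pi.star_apply, e, _root_.map_sub, _root_.map_mul,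
    _root_.map_add, map_neg, _root_.map_one, _root_.map_zero, conj_s, Complex.conj_I,
    Finset.sum_insert, Finset.mem_insert, Finset.sum_singleton]
  norm_num [Prod.ext_iff]
  ring_nf
  try simp [s_sq, s_pow4, Complex.I_sq]
  try ring

lemma qLmc (t : ℝ) :
    star (vvt t) ⬝ᵥ (ptSecond (outer (e 0 3 - e 3 0))).mulVec (vvt t) = 0 := by
  rw [quadM]
  simp only [ptSecond, Matrix.of_apply, outer, vecMulVec, Pi.sub_apply, Pi.add_apply,
    Pi.smul_apply, smul_eq_mul, Pi.star_apply, e, _root_.map_sub, _root_.map_mul,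
    _root_.map_add, map_neg, _root_.map_one, _root_.map_zero, conj_s, Complex.conj_I,
    Finset.sum_insert, Finset.mem_insert, Finset.sum_singleton]
  norm_num [Prod.ext_iff]
  ring_nf
  try simp [s_sq, s_pow4, Complex.I_sq]
  try ring


lemma ptSecond_add (A B : Matrix (Q × Q) (Q × Q) ℂ) :
    ptSecond (A + B) = ptSecond A + ptSecond B := rfl

lemma ptSecond_smul (c : ℂ) (A : Matrix (Q × Q) (Q × Q) ℂ) :
    ptSecond (c • A) = c • ptSecond A := rfl


/-- If the partial transpose of `T₁ = w₁K₅⁺ + w₂L₃⁺ + w₃K₁⁺ + w₄K₃⁻ + w₅L₃⁻`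
over the second sample `A₂ ⊗ B₂` is positive semidefinite, then `w₂ = w₅`. -/
theorem stmt17 (w1 w2 w3 w4 w5 : ℝ)
    (T1 : Matrix (Q × Q) (Q × Q) ℂ)
    (hT1 : T1 = (w1 : ℂ) • K5 + (w2 : ℂ) • L3p + (w3 : ℂ) • K1 +
      (w4 : ℂ) • K3m + (w5 : ℂ) • L3m)
    (hpt : (ptSecond T1).PosSemidef) :
    w2 = w5 := by
  have key : ∀ t : ℝ, (0:ℝ) ≤ 4*t*(w2 - w5) + t^2*(7/3*w1 + 2/3*w3 - w4) := by
    intro t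
    have h := hpt.dotProduct_mulVec_nonneg (vvt t)
    have hval : star (vvt t) ⬝ᵥ (ptSecond T1).mulVec (vvt t)
        = ((4*t*(w2 - w5) + t^2*(7/3*w1 + 2/3*w3 - w4) : ℝ) : ℂ) := by
      rw [hT1]
      simp only [K5, L3p, K1, K3m, L3m, smul_add, ptSecond_add, ptSecond_smul,
        Matrix.add_mulVec, Matrix.smul_mulVec, dotProduct_add, dotProduct_smul,
        smul_eq_mul]
      rw [qK5a, qK5b, qK5c, qK5d, qK5e, qK1a, qK3a, qK3b, qK3c, qLpa, qLpb, qLpc,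
        qLma, qLmb, qLmc]
      push_cast
      ring
    rw [hval] at h
    exact Complex.zero_le_real.mp h
  set p := w2 - w5 with hp
  set T := 7/3*w1 + 2/3*w3 - w4 with hT
  have hpz : p = 0 := by
    by_contra hne
    rcases le_or_gt T 0 with hTle | hTpos
    · have hps : 0 < p^2 := by positivity
      have h := key (-p)
      nlinarith [hps]
    · have hps : 0 < p^2 := by positivity
      have h := key (-2*p/T)
      have hT0 : T ≠ 0 := ne_of_gt hTpos
      have heq : 4*(-2*p/T)*p + (-2*p/T)^2*T = -4*p^2/T := by
        field_simp; ring
      rw [heq] at h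
      have hneg : -4*p^2/T < 0 := div_neg_of_neg_of_pos (by nlinarith) hTpos
      linarith
  linarith
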